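/- Let B ~ Binomial(k, 1/n) with k ≤ n/2, and let z ≥ 3 be real. Then E[max(0, B − z)] ≤ (1/(z−1)) · exp(−(z−1)). -/

import Mathlib

open Finset

/-- Probability mass function of `Binomial(k, p)`. -/
noncomputable def binomialPMF (k : ℕ) (p : ℝ) (i : ℕ) : ℝ :=
  (k.choose i : ℝ) * p ^ i * (1 - p) ^ (k - i)

private lemma two_pow_le_two_mul_factorial : ∀ i : ℕ, 2 ^ i ≤ 2 * i.factorial := by
  intro i
  induction i with
  | zero => simp
  | succ i ih =>
    rcases Nat.eq_zero_or_pos i with h | h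
    · subst h; simp [Nat.factorial]
    · have h2 : 2 ≤ i + 1 := by omega
      calc 2 ^ (i+1) = 2 * 2 ^ i := by ring
        _ ≤ 2 * (2 * i.factorial) := by omega
        _ ≤ 2 * ((i+1) * i.factorial) := by
            exact Nat.mul_le_mul_left _ (Nat.mul_le_mul_right _ h2)
        _ = 2 * (i+1).factorial := by rw [Nat.factorial_succ]

private lemma key_exp_bound : ∀ j : ℕ, 3 ≤ j → (j : ℝ) * Real.exp j ≤ 4 ^ j := by
  intro j hj
  induction j, hj using Nat.le_induction with
  | base =>
    have h := Real.exp_one_lt_d9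
    have h3 : Real.exp ((3:ℕ):ℝ) = Real.exp 1 ^ 3 := by
      rw [← Real.exp_nat_mul]; norm_num
    have hpos := Real.exp_pos 1
    rw [h3]
    push_cast
    nlinarith [Real.exp_pos 1, sq_nonneg (Real.exp 1)]
  | succ j hj ih =>
    have he : Real.exp (((j:ℕ):ℝ)+1) = Real.exp j * Real.exp 1 := by
      rw [Real.exp_add]
    have h := Real.exp_one_lt_d9
    have hej := Real.exp_pos ((j:ℕ):ℝ)
    have hjr : (3:ℝ) ≤ (j:ℝ) := by exact_mod_cast hj
    push_cast
    rw [he]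
    have hstep : ((j:ℝ)+1) * Real.exp 1 ≤ 4 * (j:ℝ) := by nlinarith
    calc ((j:ℝ)+1) * (Real.exp j * Real.exp 1)
        = (((j:ℝ)+1) * Real.exp 1) * Real.exp j := by ring
      _ ≤ (4 * (j:ℝ)) * Real.exp j := mul_le_mul_of_nonneg_right hstep hej.le
      _ = 4 * ((j:ℝ) * Real.exp j) := by ring
      _ ≤ 4 * 4 ^ j := by linarith
      _ = 4 ^ (j+1) := by ring

/-- For `B ~ Binomial(k, 1/n)` with `k ≤ n/2` and real `z ≥ 3`,
`E[max(0, B − z)] ≤ (1/(z−1)) · exp(−(z−1))`. -/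
theorem binomial_expected_excess_bound (n k : ℕ) (hn : 0 < n) (hk : 2 * k ≤ n)
    (z : ℝ) (hz : 3 ≤ z) :
    (∑ i ∈ Finset.range (k + 1), binomialPMF k (1 / (n : ℝ)) i * max 0 ((i : ℝ) - z))
      ≤ (1 / (z - 1)) * Real.exp (-(z - 1)) := by
  have hz0 : (0:ℝ) ≤ z := by linarith
  set m : ℕ := Nat.floor z + 1 with hm
  have hfl3 : 3 ≤ Nat.floor z := Nat.le_floor (by exact_mod_cast hz)
  have hm4 : 4 ≤ m := by omega
  have hzm : z < (m:ℝ) := by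
    have := Nat.lt_floor_add_one z
    rw [hm]; push_cast; linarith
  have hmz : (m:ℝ) - 1 ≤ z := by
    have := Nat.floor_le hz0
    rw [hm]; push_cast; linarith
  -- terms with i < m vanish
  have hzero : ∀ i : ℕ, i < m → binomialPMF k (1 / (n:ℝ)) i * max 0 ((i:ℝ) - z) = 0 := by
    intro i hi
    have h1 : (i:ℝ) + 1 ≤ (m:ℝ) := by exact_mod_cast hi
    have hiz : (i:ℝ) ≤ z := by linarith
    rw [max_eq_left (by linarith), mul_zero]
  -- termwise bound for m ≤ i
  have hterm : ∀ i : ℕ, m ≤ i →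
      binomialPMF k (1 / (n:ℝ)) i * max 0 ((i:ℝ) - z) ≤ 2 * (1/2)^m * (1/2)^i := by
    intro i hi
    have hn1 : (1:ℝ) ≤ (n:ℝ) := by exact_mod_cast hn
    have hfp : (0:ℝ) < (i.factorial : ℝ) := by exact_mod_cast i.factorial_pos
    have him : (m:ℝ) ≤ (i:ℝ) := by exact_mod_cast hi
    have hn1' : 1/(n:ℝ) ≤ 1 := by rw [div_le_one (by linarith)]; exact hn1
    have hn0' : (0:ℝ) < 1/(n:ℝ) := by positivity
    -- pmf bound
    have hpmf : binomialPMF k (1 / (n:ℝ)) i ≤ 2 * (1/4)^i := by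
      have hc : (k.choose i : ℝ) ≤ (k:ℝ)^i / i.factorial := by
        have := Nat.choose_le_pow_div (α := ℝ) i k
        exact_mod_cast this
      have hone : (1 - 1/(n:ℝ)) ^ (k - i) ≤ 1 := pow_le_one₀ (by linarith) (by linarith)
      have hb1 : binomialPMF k (1/(n:ℝ)) i ≤ (k.choose i : ℝ) * (1/(n:ℝ))^i := by
        unfold binomialPMF
        have h0 : (0:ℝ) ≤ (k.choose i : ℝ) * (1/(n:ℝ))^i := by positivity
        calc (k.choose i : ℝ) * (1/(n:ℝ))^i * (1 - 1/(n:ℝ))^(k-i)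
            ≤ (k.choose i : ℝ) * (1/(n:ℝ))^i * 1 := mul_le_mul_of_nonneg_left hone h0
          _ = (k.choose i : ℝ) * (1/(n:ℝ))^i := by ring
      have hb2 : (k.choose i : ℝ) * (1/(n:ℝ))^i ≤ ((k:ℝ)/(n:ℝ))^i / i.factorial := by
        have h := mul_le_mul_of_nonneg_right hc (by positivity : (0:ℝ) ≤ (1/(n:ℝ))^i)
        calc (k.choose i : ℝ) * (1/(n:ℝ))^i ≤ (k:ℝ)^i / i.factorial * (1/(n:ℝ))^i := h
          _ = ((k:ℝ)/(n:ℝ))^i / i.factorial := by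
              rw [div_pow, div_pow, one_pow]; ring
      have hkn : (k:ℝ)/(n:ℝ) ≤ 1/2 := by
        rw [div_le_div_iff₀ (by linarith) (by norm_num)]
        have : (2:ℝ) * k ≤ (n:ℝ) := by exact_mod_cast hk
        linarith
      have hb3 : ((k:ℝ)/(n:ℝ))^i / i.factorial ≤ (1/2)^i / i.factorial := by
        gcongr
      have hfact : (2:ℝ)^i ≤ 2 * i.factorial := by exact_mod_cast two_pow_le_two_mul_factorial i
      have hb4 : ((1:ℝ)/2)^i / i.factorial ≤ 2 * (1/4)^i := by
        have h1 : (1:ℝ)/(i.factorial) ≤ 2/2^i := by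
          rw [div_le_div_iff₀ hfp (by positivity)]
          linarith
        calc ((1:ℝ)/2)^i / i.factorial = (1/2)^i * (1/i.factorial) := by
              rw [div_eq_mul_one_div]
          _ ≤ (1/2)^i * (2/2^i) := mul_le_mul_of_nonneg_left h1 (by positivity)
          _ = 2 * (1/4)^i := by
              rw [show ((1:ℝ)/2)^i = 1/2^i from by rw [div_pow, one_pow],
                show ((1:ℝ)/4)^i = 1/4^i from by rw [div_pow, one_pow],
                show (4:ℝ)^i = 2^i * 2^i from by rw [← mul_pow]; norm_num]
              have h2i : (0:ℝ) < (2:ℝ)^i := by positivity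
              field_simp
      linarith
    -- excess bound
    have hmaxeq : max 0 ((i:ℝ) - z) = (i:ℝ) - z := max_eq_right (by linarith)
    have hcast : ((i - m : ℕ):ℝ) = (i:ℝ) - (m:ℝ) := by
      rw [Nat.cast_sub hi]
    have hnatpow : ((2^(i-m) : ℕ):ℝ) = (2:ℝ)^(i-m) := by push_cast; ring
    have hexc : (i:ℝ) - z ≤ (2:ℝ)^(i-m) := by
      have h1 : (i - m : ℕ) < 2^(i - m) := Nat.lt_two_pow_self
      have h2 : ((i - m : ℕ):ℝ) + 1 ≤ (2:ℝ)^(i-m) := by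
        rw [← hnatpow]; exact_mod_cast h1
      rw [hcast] at h2
      linarith
    have hexc0 : (0:ℝ) ≤ (i:ℝ) - z := by linarith
    have hpow : (2:ℝ)^(i-m) * 2^m = 2^i := by
      rw [← pow_add]; congr 1; omega
    have hb : binomialPMF k (1/(n:ℝ)) i * max 0 ((i:ℝ) - z)
        ≤ (2 * (1/4)^i) * (2:ℝ)^(i-m) := by
      rw [hmaxeq]
      have hpmf0 : (0:ℝ) ≤ binomialPMF k (1/(n:ℝ)) i := by
        have h1n : (0:ℝ) ≤ 1 - 1/(n:ℝ) := by linarith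
        unfold binomialPMF
        exact mul_nonneg (mul_nonneg (by positivity) (by positivity)) (pow_nonneg h1n _)
      exact mul_le_mul hpmf hexc hexc0 (by positivity)
    have heq : (2 * ((1:ℝ)/4)^i) * (2:ℝ)^(i-m) = 2 * (1/2)^m * (1/2)^i := by
      have h2m : (0:ℝ) < (2:ℝ)^m := by positivity
      have h2i : (0:ℝ) < (2:ℝ)^i := by positivity
      have h4 : ((1:ℝ)/4)^i = 1/(2^i * 2^i) := by
        rw [div_pow, one_pow, show (4:ℝ)^i = 2^i * 2^i from by rw [← mul_pow]; norm_num]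
      rw [h4, div_pow, div_pow, one_pow, one_pow, ← hpow]
      field_simp
    linarith [hb, heq ▸ hb]
  -- split the sum
  have hzlt : (0:ℝ) < z - 1 := by linarith
  rcases le_or_gt (k+1) m with hcase | hcase
  · have : (∑ i ∈ Finset.range (k + 1),
        binomialPMF k (1 / (n : ℝ)) i * max 0 ((i : ℝ) - z)) = 0 := by
      apply Finset.sum_eq_zero
      intro i hi
      exact hzero i (lt_of_lt_of_le (Finset.mem_range.1 hi) hcase)
    rw [this]
    positivity
  · have hmk : m ≤ k + 1 := hcase.le
    have hsplit : (∑ i ∈ Finset.range (k + 1),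
          binomialPMF k (1 / (n : ℝ)) i * max 0 ((i : ℝ) - z))
        = ∑ i ∈ Finset.Ico m (k+1),
          binomialPMF k (1 / (n : ℝ)) i * max 0 ((i : ℝ) - z) := by
      rw [Finset.range_eq_Ico, ← Finset.sum_Ico_consecutive _ (Nat.zero_le m) hmk]
      have h0 : (∑ i ∈ Finset.Ico 0 m,
          binomialPMF k (1 / (n : ℝ)) i * max 0 ((i : ℝ) - z)) = 0 := by
        apply Finset.sum_eq_zero
        intro i hi
        exact hzero i (Finset.mem_Ico.1 hi).2
      rw [h0, zero_add]
    rw [hsplit]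
    have hsum1 : (∑ i ∈ Finset.Ico m (k+1),
          binomialPMF k (1 / (n : ℝ)) i * max 0 ((i : ℝ) - z))
        ≤ ∑ i ∈ Finset.Ico m (k+1), 2 * (1/2)^m * (1/2:ℝ)^i := by
      apply Finset.sum_le_sum
      intro i hi
      exact hterm i (Finset.mem_Ico.1 hi).1
    have hgeom : (∑ i ∈ Finset.Ico m (k+1), ((1:ℝ)/2)^i) ≤ 2 * (1/2)^m := by
      rw [geom_sum_Ico (by norm_num : (1:ℝ)/2 ≠ 1) hmk]
      have : (0:ℝ) ≤ ((1:ℝ)/2)^(k+1) := by positivity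
      rw [div_le_iff_of_neg (by norm_num : (1:ℝ)/2 - 1 < 0)]
      nlinarith
    have hsum2 : (∑ i ∈ Finset.Ico m (k+1), 2 * ((1:ℝ)/2)^m * (1/2:ℝ)^i)
        ≤ 2 * (1/2)^m * (2 * (1/2)^m) := by
      rw [← Finset.mul_sum]
      exact mul_le_mul_of_nonneg_left hgeom (by positivity)
    -- final numeric bound with j = m - 1
    set j : ℕ := m - 1 with hj
    have hj3 : 3 ≤ j := by omega
    have hjm : m = j + 1 := by omega
    have hjr : (3:ℝ) ≤ (j:ℝ) := by exact_mod_cast hj3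
    have hjz : z - 1 ≤ (j:ℝ) := by
      have : (j:ℝ) = (m:ℝ) - 1 := by rw [hjm]; push_cast; ring
      linarith
    have hkey := key_exp_bound j hj3
    have hejp : (0:ℝ) < Real.exp (j:ℝ) := Real.exp_pos _
    have hfinal : 2 * ((1:ℝ)/2)^m * (2 * (1/2)^m) ≤ (1/(z-1)) * Real.exp (-(z-1)) := by
      have h1 : 2 * ((1:ℝ)/2)^m * (2 * (1/2)^m) = (1/4)^j := by
        rw [hjm, div_pow, div_pow, one_pow, one_pow, pow_succ,
          show (4:ℝ)^j = 2^j * 2^j from by rw [← mul_pow]; norm_num]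
        have : (0:ℝ) < (2:ℝ)^j := by positivity
        field_simp
      rw [h1]
      have h2 : ((1:ℝ)/4)^j ≤ Real.exp (-(j:ℝ)) / (j:ℝ) := by
        rw [Real.exp_neg, div_pow, one_pow]
        rw [div_le_div_iff₀ (by positivity) (by positivity), one_mul, ← div_eq_inv_mul]
        exact (le_div_iff₀ hejp).2 hkey
      have h3 : Real.exp (-(j:ℝ)) / (j:ℝ) ≤ (1/(z-1)) * Real.exp (-(z-1)) := by
        have he : Real.exp (-(j:ℝ)) ≤ Real.exp (-(z-1)) := by
          apply Real.exp_le_exp.2; linarith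
        have hd : 1/(j:ℝ) ≤ 1/(z-1) := by
          apply one_div_le_one_div_of_le hzlt hjz
        calc Real.exp (-(j:ℝ)) / (j:ℝ) = (1/(j:ℝ)) * Real.exp (-(j:ℝ)) := by ring
          _ ≤ (1/(z-1)) * Real.exp (-(z-1)) := by
              apply mul_le_mul hd he (Real.exp_pos _).le (by positivity)
      linarith
    linarith
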